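/- With $\Lambda$ and $\mu$ defined from a subharmonic, nonharmonic polynomial $p$ as $\Lambda(z,\delta) = \sum_{j,k\ge 1}|A_{jk}(z)|\delta^{j+k}$ and $\mu(z,\delta) = \inf_{j,k\ge 1}(\delta/|A_{jk}(z)|)^{1/(j+k)}$, there are constants $c, C > 0$ depending only on the degree of $p$ such that $c\,\delta \le \Lambda(z, \mu(z,\delta)) \le C\,\delta$ for all $\delta > 0$ and all $z$ with some $A_{jk}(z) \neq 0$. -/

import Mathlib

open Finset Complex

/-- The coefficient `A_{jk}(z) = (1/(j!k!)) ∂^{j+k}p/∂z^j∂z̄^k (z)` of the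
polynomial `p(z) = ∑_{m,n ≤ d} a m n · z^m · z̄^n`. -/
noncomputable def Acoef (d : ℕ) (a : ℕ → ℕ → ℂ) (j k : ℕ) (z : ℂ) : ℂ :=
  ∑ m ∈ Finset.range (d + 1), ∑ n ∈ Finset.range (d + 1),
    (m.choose j : ℂ) * (n.choose k : ℂ) * a m n * z ^ (m - j) * (starRingEnd ℂ z) ^ (n - k)

/-- The twist `T(w,z) = -2 Im (∑_{j≥1} (1/j!) ∂^j p/∂z^j (z) (w-z)^j)`. -/
noncomputable def Twist (d : ℕ) (a : ℕ → ℕ → ℂ) (w z : ℂ) : ℝ :=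
  -2 * (∑ j ∈ Finset.Icc 1 d, Acoef d a j 0 z * (w - z) ^ j).im

/-- `Λ(z,δ) = ∑_{j,k ≥ 1} |A_{jk}(z)| δ^{j+k}`. -/
noncomputable def Lam (d : ℕ) (a : ℕ → ℕ → ℂ) (z : ℂ) (δ : ℝ) : ℝ :=
  ∑ j ∈ Finset.Icc 1 d, ∑ k ∈ Finset.Icc 1 d,
    ‖Acoef d a j k z‖ * δ ^ (j + k)

/-- `μ(z,δ) = inf_{j,k ≥ 1, A_{jk}(z) ≠ 0} (|δ|/|A_{jk}(z)|)^{1/(j+k)}`. -/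
noncomputable def muF (d : ℕ) (a : ℕ → ℕ → ℂ) (z : ℂ) (δ : ℝ) : ℝ :=
  sInf {x : ℝ | ∃ j k : ℕ, 1 ≤ j ∧ 1 ≤ k ∧ Acoef d a j k z ≠ 0 ∧
    x = (|δ| / ‖Acoef d a j k z‖) ^ (1 / ((j : ℝ) + (k : ℝ)))}

/-- The Wirtinger derivative `∂f/∂z = (1/2)(∂f/∂x - i ∂f/∂y)`. -/
noncomputable def wDz (f : ℂ → ℂ) (z : ℂ) : ℂ :=
  (fderiv ℝ f z 1 - Complex.I * fderiv ℝ f z Complex.I) / 2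

/-- The Wirtinger derivative `∂f/∂z̄ = (1/2)(∂f/∂x + i ∂f/∂y)`. -/
noncomputable def wDzbar (f : ℂ → ℂ) (z : ℂ) : ℂ :=
  (fderiv ℝ f z 1 + Complex.I * fderiv ℝ f z Complex.I) / 2

/-- The nonisotropic pseudodistance `d_{NI}(z,w,t) = |z-w| + μ(z, t+T(w,z))`. -/
noncomputable def dNI (d : ℕ) (a : ℕ → ℕ → ℂ) (z w : ℂ) (t : ℝ) : ℝ :=
  ‖z - w‖ + muF d a z (t + Twist d a w z)

lemma Acoef_eq_zero_left {d : ℕ} {a : ℕ → ℕ → ℂ} {j k : ℕ} {z : ℂ} (hj : d < j) :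
    Acoef d a j k z = 0 := by
  unfold Acoef
  apply Finset.sum_eq_zero
  intro m hm
  apply Finset.sum_eq_zero
  intro n hn
  have hmj : m.choose j = 0 :=
    Nat.choose_eq_zero_of_lt (lt_of_le_of_lt (Nat.lt_succ_iff.mp (Finset.mem_range.mp hm)) hj)
  simp [hmj]

lemma Acoef_eq_zero_right {d : ℕ} {a : ℕ → ℕ → ℂ} {j k : ℕ} {z : ℂ} (hk : d < k) :
    Acoef d a j k z = 0 := by
  unfold Acoef
  apply Finset.sum_eq_zero
  intro m hm
  apply Finset.sum_eq_zero
  intro n hn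
  have hnk : n.choose k = 0 :=
    Nat.choose_eq_zero_of_lt (lt_of_le_of_lt (Nat.lt_succ_iff.mp (Finset.mem_range.mp hn)) hk)
  simp [hnk]

lemma rpow_one_div_pow {x : ℝ} (hx : 0 ≤ x) {n : ℕ} (hn : n ≠ 0) :
    (x ^ (1 / (n : ℝ))) ^ n = x := by
  rw [← Real.rpow_natCast (x ^ (1 / (n : ℝ))) n, ← Real.rpow_mul hx,
    one_div, inv_mul_cancel₀ (Nat.cast_ne_zero.mpr hn), Real.rpow_one]

/-- For a subharmonic, nonharmonic polynomial `p` of degree `d`,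
`Λ(z, μ(z,δ)) ∼ δ` with constants depending only on `d`, for all `δ > 0` and all
`z` at which some coefficient `A_{jk}(z)` with `j,k ≥ 1` is nonzero. -/
theorem lam_mu_approx_inverse (d : ℕ) :
    ∃ c C : ℝ, 0 < c ∧ 0 < C ∧
      ∀ a : ℕ → ℕ → ℂ,
        (∀ m n, d < m + n → a m n = 0) →
        (∀ m n, (starRingEnd ℂ) (a m n) = a n m) →
        (∀ z : ℂ, 0 ≤ (Acoef d a 1 1 z).re) →
        (∃ z₀ : ℂ, Acoef d a 1 1 z₀ ≠ 0) →
        ∀ z : ℂ, (∃ j k : ℕ, 1 ≤ j ∧ 1 ≤ k ∧ Acoef d a j k z ≠ 0) →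
          ∀ δ : ℝ, 0 < δ →
            c * δ ≤ Lam d a z (muF d a z δ) ∧ Lam d a z (muF d a z δ) ≤ C * δ := by
  refine ⟨1, (d : ℝ) ^ 2 + 1, one_pos, by positivity, ?_⟩
  intro a _ _ _ _ z hz δ hδ
  set S : Set ℝ := {x : ℝ | ∃ j k : ℕ, 1 ≤ j ∧ 1 ≤ k ∧ Acoef d a j k z ≠ 0 ∧
    x = (|δ| / ‖Acoef d a j k z‖) ^ (1 / ((j : ℝ) + (k : ℝ)))} with hS
  have hμdef : muF d a z δ = sInf S := rfl
  -- any nonzero coefficient has indices ≤ d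
  have hle : ∀ j k : ℕ, Acoef d a j k z ≠ 0 → j ≤ d ∧ k ≤ d := by
    intro j k hA
    constructor
    · by_contra h
      exact hA (Acoef_eq_zero_left (not_le.mp h))
    · by_contra h
      exact hA (Acoef_eq_zero_right (not_le.mp h))
  -- S is finite
  have hfin : S.Finite := by
    apply Set.Finite.subset (Finset.finite_toSet
      ((Finset.Icc 1 d ×ˢ Finset.Icc 1 d).image fun p =>
        (|δ| / ‖Acoef d a p.1 p.2 z‖) ^ (1 / ((p.1 : ℝ) + (p.2 : ℝ)))))
    rintro x ⟨j, k, hj, hk, hA, rfl⟩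
    obtain ⟨hjd, hkd⟩ := hle j k hA
    simp only [Finset.coe_image, Set.mem_image, Finset.mem_coe, Finset.mem_product,
      Finset.mem_Icc]
    exact ⟨(j, k), ⟨⟨hj, hjd⟩, ⟨hk, hkd⟩⟩, rfl⟩
  have hne : S.Nonempty := by
    obtain ⟨j, k, hj, hk, hA⟩ := hz
    exact ⟨_, j, k, hj, hk, hA, rfl⟩
  have hbdd : BddBelow S := hfin.bddBelow
  obtain ⟨j₀, k₀, hj₀, hk₀, hA₀, hμeq⟩ := hne.csInf_mem hfin
  set μ := muF d a z δ with hμ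
  rw [← hμdef] at hμeq
  have hA₀pos : 0 < ‖Acoef d a j₀ k₀ z‖ := by
    simpa using hA₀
  have hμnonneg : 0 ≤ μ := by
    rw [hμeq]
    exact Real.rpow_nonneg (div_nonneg (abs_nonneg _) (norm_nonneg _)) _
  have hn₀ : j₀ + k₀ ≠ 0 := by omega
  have hpow : μ ^ (j₀ + k₀) = δ / ‖Acoef d a j₀ k₀ z‖ := by
    rw [hμeq]
    have : ((j₀ : ℝ) + (k₀ : ℝ)) = ((j₀ + k₀ : ℕ) : ℝ) := by push_cast; ring
    rw [this, rpow_one_div_pow (div_nonneg (abs_nonneg _) (norm_nonneg _)) hn₀,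
      abs_of_pos hδ]
  have hkey : ‖Acoef d a j₀ k₀ z‖ * μ ^ (j₀ + k₀) = δ := by
    rw [hpow, mul_div_cancel₀ _ (ne_of_gt hA₀pos)]
  obtain ⟨hj₀d, hk₀d⟩ := hle j₀ k₀ hA₀
  constructor
  · -- lower bound
    rw [one_mul, ← hkey]
    have h1 : ‖Acoef d a j₀ k₀ z‖ * μ ^ (j₀ + k₀) ≤
        ∑ k ∈ Finset.Icc 1 d, ‖Acoef d a j₀ k z‖ * μ ^ (j₀ + k) :=
      Finset.single_le_sum (f := fun k => ‖Acoef d a j₀ k z‖ * μ ^ (j₀ + k))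
        (fun k _ => by positivity) (Finset.mem_Icc.mpr ⟨hk₀, hk₀d⟩)
    refine h1.trans ?_
    exact Finset.single_le_sum
      (f := fun j => ∑ k ∈ Finset.Icc 1 d, ‖Acoef d a j k z‖ * μ ^ (j + k))
      (fun j _ => Finset.sum_nonneg fun k _ => by positivity)
      (Finset.mem_Icc.mpr ⟨hj₀, hj₀d⟩)
  · -- upper bound
    have hterm : ∀ j ∈ Finset.Icc 1 d, ∀ k ∈ Finset.Icc 1 d,
        ‖Acoef d a j k z‖ * μ ^ (j + k) ≤ δ := by
      intro j hjm k hkm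
      by_cases hA : Acoef d a j k z = 0
      · simp [hA, hδ.le]
      · have hApos : 0 < ‖Acoef d a j k z‖ := by simpa using hA
        have hxmem : (|δ| / ‖Acoef d a j k z‖) ^ (1 / ((j : ℝ) + (k : ℝ))) ∈ S :=
          ⟨j, k, (Finset.mem_Icc.mp hjm).1, (Finset.mem_Icc.mp hkm).1, hA, rfl⟩
        have hμle : μ ≤ (|δ| / ‖Acoef d a j k z‖) ^ (1 / ((j : ℝ) + (k : ℝ))) :=
          csInf_le hbdd hxmem
        have hn : j + k ≠ 0 := by
          have := (Finset.mem_Icc.mp hjm).1; omega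
        have hpow' : ((|δ| / ‖Acoef d a j k z‖) ^
            (1 / ((j : ℝ) + (k : ℝ)))) ^ (j + k) = δ / ‖Acoef d a j k z‖ := by
          have hc : ((j : ℝ) + (k : ℝ)) = ((j + k : ℕ) : ℝ) := by push_cast; ring
          rw [hc, rpow_one_div_pow (div_nonneg (abs_nonneg _) (norm_nonneg _)) hn,
            abs_of_pos hδ]
        calc ‖Acoef d a j k z‖ * μ ^ (j + k)
            ≤ ‖Acoef d a j k z‖ *
              ((|δ| / ‖Acoef d a j k z‖) ^ (1 / ((j : ℝ) + (k : ℝ)))) ^ (j + k) := by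
              gcongr
          _ = δ := by rw [hpow', mul_div_cancel₀ _ (ne_of_gt hApos)]
    have hsum : Lam d a z μ ≤ ∑ j ∈ Finset.Icc 1 d, ∑ k ∈ Finset.Icc 1 d, δ := by
      unfold Lam
      refine Finset.sum_le_sum fun j hjm => Finset.sum_le_sum fun k hkm => ?_
      exact hterm j hjm k hkm
    refine hsum.trans ?_
    have : ∑ j ∈ Finset.Icc 1 d, ∑ k ∈ Finset.Icc 1 d, δ = (d : ℝ) * ((d : ℝ) * δ) := by
      simp [Finset.sum_const, Nat.card_Icc, mul_comm]
    rw [this]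
    nlinarith [hδ.le, sq_nonneg (d : ℝ)]
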